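/- Let A : ℍ → ℍ be ℝ-linear and write A(x) = a(x) + b(x)i + c(x)j + d(x)k with a,b,c,d : ℍ → ℝ linear functionals. If A(ix)(ix) = -A(x)x for all x ∈ ℍ, then a(x) = b(ix), b(x) = -a(ix), c(x) = -d(ix), and d(x) = c(ix) for all x. -/

import Mathlib

/-- The quaternion `i`. -/
def quatI : Quaternion ℝ := ⟨0, 1, 0, 0⟩

lemma quatI_sq : quatI * quatI = -1 := by
  ext <;> simp [Quaternion.re_mul, Quaternion.imI_mul, Quaternion.imJ_mul,
    Quaternion.imK_mul] <;> simp [quatI] <;> rfl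

/-- Write an ℝ-linear `A : ℍ → ℍ` as `A(x) = a(x) + b(x)i + c(x)j + d(x)k`.
If `A(ix)(ix) = -A(x)x` for all `x`, then `a(x) = b(ix)`, `b(x) = -a(ix)`,
`c(x) = -d(ix)` and `d(x) = c(ix)`. -/
theorem stmt1 (A : Quaternion ℝ →ₗ[ℝ] Quaternion ℝ)
    (a b c d : Quaternion ℝ →ₗ[ℝ] ℝ)
    (hdecomp : ∀ x : Quaternion ℝ, A x = (⟨a x, b x, c x, d x⟩ : Quaternion ℝ))
    (hhol : ∀ x : Quaternion ℝ, A (quatI * x) * (quatI * x) = -(A x * x)) :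
    ∀ x : Quaternion ℝ,
      a x = b (quatI * x) ∧ b x = -(a (quatI * x)) ∧
      c x = -(d (quatI * x)) ∧ d x = c (quatI * x) := by
  have h1 : A quatI * quatI = -(A 1) := by simpa using hhol 1
  have hAi : A quatI = A 1 * quatI := by
    have := congrArg (· * quatI) h1
    simp only [mul_assoc, quatI_sq, mul_neg_one, neg_mul] at this
    exact neg_injective this
  have hkey : ∀ x : Quaternion ℝ, A (quatI * x) * quatI = -(A x) := by
    intro x
    have h := hhol (x + 1)
    rw [mul_add, mul_one, map_add, map_add, add_mul, mul_add, mul_add, add_mul,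
      mul_add, mul_add, mul_one, hhol x, h1] at h
    have h2 : A quatI * (quatI * x) = -(A 1 * x) := by
      rw [hAi, mul_assoc, ← mul_assoc quatI, quatI_sq, neg_one_mul, mul_neg]
    rw [h2] at h
    rw [← sub_eq_zero] at h ⊢
    abel_nf at h ⊢
    simpa using h
  have hmain : ∀ x : Quaternion ℝ, A (quatI * x) = A x * quatI := by
    intro x
    have := congrArg (· * quatI) (hkey x)
    simp only [mul_assoc, quatI_sq, mul_neg_one, neg_mul] at this
    exact neg_injective this
  intro x
  have h := hmain x
  rw [Quaternion.ext_iff] at h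
  simp only [Quaternion.re_mul, Quaternion.imI_mul, Quaternion.imJ_mul,
    Quaternion.imK_mul] at h
  rw [hdecomp x, hdecomp (quatI * x)] at h
  simp only [quatI] at h
  obtain ⟨hre, hI, hJ, hK⟩ := h
  refine ⟨?_, ?_, ?_, ?_⟩ <;> simp only [quatI] <;> linarith
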